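/- For every μ with 1/2 < μ ≤ 1, the commuter h_μ is strictly increasing on [0,1]; that is, x < y implies h_μ(x) < h_μ(y) for all x, y ∈ [0,1]. -/
import Mathlib


open Set

/-- `h : [0,1] → [0,1]` satisfies the commuter functional equation for `T_μ`:
`h(x) = (1/2)·h(2μx)` for `0 ≤ x ≤ 1/2` and `h(x) = 1 - (1/2)·h(2μ(1-x))` for `1/2 < x ≤ 1`. -/
def IsCommuter (μ : ℝ) (h : ℝ → ℝ) : Prop :=
  (∀ x ∈ Icc (0:ℝ) 1, h x ∈ Icc (0:ℝ) 1) ∧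
  (∀ x : ℝ, 0 ≤ x → x ≤ 1/2 → h x = (1/2) * h (2*μ*x)) ∧
  (∀ x : ℝ, 1/2 < x → x ≤ 1 → h x = 1 - (1/2) * h (2*μ*(1-x)))

/-- For `1/2 < μ ≤ 1`, the commuter `h_μ` is strictly increasing on `[0,1]`. -/
theorem commuter_strictMonoOn (μ : ℝ) (hμ1 : 1/2 < μ) (hμ2 : μ ≤ 1)
    (h : ℝ → ℝ) (hc : IsCommuter μ h) :
    StrictMonoOn h (Icc (0:ℝ) 1) := by
  obtain ⟨hmem, he1, he2⟩ := hc
  have h2μ : (1:ℝ) < 2*μ := by linarith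
  have hμ0 : (0:ℝ) < μ := by linarith
  -- h is positive on (0,1]
  have hpos : ∀ n : ℕ, ∀ s : ℝ, 0 < s → s ≤ 1 → 1/2 < (2*μ)^n * s → 0 < h s := by
    intro n
    induction n with
    | zero =>
      intro s hs0 hs1 hgt
      rw [pow_zero, one_mul] at hgt
      have e := he2 s hgt hs1
      have hb : 2*μ*(1-s) ∈ Icc (0:ℝ) 1 := ⟨by nlinarith, by nlinarith⟩
      have hb1 := (hmem _ hb).2
      rw [e]; linarith
    | succ n ih =>
      intro s hs0 hs1 hgt
      rcases le_or_gt s (1/2) with hle | hlt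
      · have e := he1 s hs0.le hle
        have h1 : 2*μ*s ≤ 1 := by nlinarith
        have h2 : 0 < 2*μ*s := by positivity
        have key : 1/2 < (2*μ)^n * (2*μ*s) := by
          have : (2*μ)^n * (2*μ*s) = (2*μ)^(n+1) * s := by ring
          rw [this]; exact hgt
        have := ih (2*μ*s) h2 h1 key
        rw [e]; linarith
      · have e := he2 s hlt hs1
        have hb : 2*μ*(1-s) ∈ Icc (0:ℝ) 1 := ⟨by nlinarith, by nlinarith⟩
        have hb1 := (hmem _ hb).2
        rw [e]; linarith
  have hpos' : ∀ s : ℝ, 0 < s → s ≤ 1 → 0 < h s := by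
    intro s hs0 hs1
    obtain ⟨n, hn⟩ := pow_unbounded_of_one_lt (1/(2*s)) h2μ
    refine hpos n s hs0 hs1 ?_
    have : 1/(2*s) < (2*μ)^n := hn
    calc 1/2 = (1/(2*s)) * s := by field_simp
    _ < (2*μ)^n * s := by
        apply mul_lt_mul_of_pos_right hn hs0
  -- h < 1 on [0,1)
  have hlt1 : ∀ t : ℝ, 0 ≤ t → t < 1 → h t < 1 := by
    intro t ht0 ht1
    rcases le_or_gt t (1/2) with hle | hlt
    · have e := he1 t ht0 hle
      have hb : 2*μ*t ∈ Icc (0:ℝ) 1 := ⟨by positivity, by nlinarith⟩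
      have hb1 := (hmem _ hb).2
      rw [e]; linarith
    · have e := he2 t hlt (le_of_lt ht1)
      have hb0 : 0 < 2*μ*(1-t) := by nlinarith
      have hb1 : 2*μ*(1-t) ≤ 1 := by nlinarith
      have := hpos' _ hb0 hb1
      rw [e]; linarith
  -- straddle case: strict
  have hstraddle : ∀ x y : ℝ, 0 ≤ x → x ≤ 1/2 → 1/2 < y → y ≤ 1 → h x < h y := by
    intro x y hx0 hx2 hy1 hy2
    have e1 := he1 x hx0 hx2
    have e2 := he2 y hy1 hy2
    have ha0 : 0 ≤ 2*μ*(1-y) := by nlinarith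
    have ha1 : 2*μ*(1-y) < 1 := by nlinarith
    have hA := hlt1 _ ha0 ha1
    have hb : 2*μ*x ∈ Icc (0:ℝ) 1 := ⟨by positivity, by nlinarith⟩
    have hB := (hmem _ hb).2
    rw [e1, e2]; linarith
  -- main induction
  have main : ∀ n : ℕ, ∀ x y : ℝ, 0 ≤ x → y ≤ 1 → x < y →
      1/2 < (2*μ)^n * (y - x) → h x < h y := by
    intro n
    induction n with
    | zero =>
      intro x y hx0 hy1 hxy hgt
      rw [pow_zero, one_mul] at hgt
      exact hstraddle x y hx0 (by linarith) (by linarith) hy1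
    | succ n ih =>
      intro x y hx0 hy1 hxy hgt
      rcases le_or_gt y (1/2) with hy2 | hy2
      · -- both in [0,1/2]
        have e1 := he1 x hx0 (by linarith)
        have e2 := he1 y (by linarith) hy2
        have key : 1/2 < (2*μ)^n * (2*μ*y - 2*μ*x) := by
          have : (2*μ)^n * (2*μ*y - 2*μ*x) = (2*μ)^(n+1) * (y - x) := by ring
          rw [this]; exact hgt
        have := ih (2*μ*x) (2*μ*y) (by positivity) (by nlinarith)
          (by nlinarith) key
        rw [e1, e2]; linarith
      · rcases le_or_gt x (1/2) with hx2 | hx2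
        · exact hstraddle x y hx0 hx2 hy2 hy1
        · -- both in (1/2,1]
          have e1 := he2 x hx2 (by linarith)
          have e2 := he2 y hy2 hy1
          have key : 1/2 < (2*μ)^n * (2*μ*(1-x) - 2*μ*(1-y)) := by
            have : (2*μ)^n * (2*μ*(1-x) - 2*μ*(1-y)) = (2*μ)^(n+1) * (y - x) := by
              ring
            rw [this]; exact hgt
          have := ih (2*μ*(1-y)) (2*μ*(1-x)) (by nlinarith) (by nlinarith)
            (by nlinarith) key
          rw [e1, e2]; linarith
  intro x hx y hy hxy
  obtain ⟨n, hn⟩ := pow_unbounded_of_one_lt (1/(2*(y-x))) h2μ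
  refine main n x y hx.1 hy.2 hxy ?_
  have hd : 0 < y - x := by linarith
  calc 1/2 = (1/(2*(y-x))) * (y-x) := by field_simp
  _ < (2*μ)^n * (y-x) := mul_lt_mul_of_pos_right hn hd
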